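/- Let V be a finite-dimensional vector space over a field F with a bilinear form ζ, and let 1 ≤ k ≤ dim V. Then there is a unique bilinear form ζ∧ on the k-th exterior power Λᵏ V satisfying ζ∧(u₁∧⋯∧uₖ, v₁∧⋯∧vₖ) = det(ζ(uᵢ, vⱼ)); moreover if ζ is nondegenerate then so is ζ∧, and if ζ is symmetric then so is ζ∧. -/

import Mathlib

/-- The pure wedge `u₁ ∧ ⋯ ∧ uₖ`, as an element of the `k`-th exterior power `⋀[F]^k V`. -/
noncomputable def wedge {F V : Type*} [Field F] [AddCommGroup V] [Module F V]
    (k : ℕ) (u : Fin k → V) : ⋀[F]^k V :=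
  ⟨ExteriorAlgebra.ιMulti F k u, ExteriorAlgebra.ιMulti_range F k (Set.mem_range_self u)⟩


section Aux

variable {F V : Type*} [Field F] [AddCommGroup V] [Module F V]

lemma wedge_span (k : ℕ) :
    Submodule.span F (Set.range (wedge (F := F) (V := V) k)) = ⊤ := by
  apply Submodule.map_injective_of_injective (⋀[F]^k V).injective_subtype
  rw [Submodule.map_span, Submodule.map_top, Submodule.range_subtype]
  have himg : (⋀[F]^k V).subtype '' Set.range (wedge (F := F) (V := V) k)
      = Set.range (ExteriorAlgebra.ιMulti F k) := by
    ext x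
    constructor
    · rintro ⟨y, ⟨u, rfl⟩, rfl⟩; exact ⟨u, rfl⟩
    · rintro ⟨u, rfl⟩; exact ⟨wedge k u, ⟨u, rfl⟩, rfl⟩
  rw [himg, ExteriorAlgebra.ιMulti_span_fixedDegree]

lemma wedge_ext {k : ℕ} {N : Type*} [AddCommGroup N] [Module F N]
    {f g : ⋀[F]^k V →ₗ[F] N} (h : ∀ u, f (wedge k u) = g (wedge k u)) : f = g := by
  apply LinearMap.ext_on (wedge_span k)
  rintro x ⟨u, rfl⟩
  exact h u

/-- the alternating map in `v`, for fixed `u` -/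
noncomputable def innerAlt (ζ : LinearMap.BilinForm F V) (k : ℕ) (u : Fin k → V) :
    V [⋀^Fin k]→ₗ[F] F :=
  (Matrix.detRowAlternating (n := Fin k) (R := F)).compLinearMap
    (LinearMap.pi fun i => ζ (u i))

lemma innerAlt_apply (ζ : LinearMap.BilinForm F V) (k : ℕ) (u v : Fin k → V) :
    innerAlt ζ k u v = Matrix.det (Matrix.of fun i j => ζ (u i) (v j)) := by
  rw [← Matrix.det_transpose]
  rfl

/-- the alternating map in `u`, for fixed `v` -/
noncomputable def outerAlt (ζ : LinearMap.BilinForm F V) (k : ℕ) (v : Fin k → V) :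
    V [⋀^Fin k]→ₗ[F] F :=
  (Matrix.detRowAlternating (n := Fin k) (R := F)).compLinearMap
    (LinearMap.pi fun j => ζ.flip (v j))

lemma outerAlt_apply (ζ : LinearMap.BilinForm F V) (k : ℕ) (v u : Fin k → V) :
    outerAlt ζ k v u = Matrix.det (Matrix.of fun i j => ζ (u i) (v j)) := by
  show Matrix.det (Matrix.of fun i j => ζ.flip (v j) (u i)) = _
  simp [LinearMap.flip_apply]

lemma innerAlt_swap (ζ : LinearMap.BilinForm F V) (k : ℕ) (u v : Fin k → V) :
    innerAlt ζ k u v = outerAlt ζ k v u := by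
  rw [innerAlt_apply, outerAlt_apply]

noncomputable def innerMap (ζ : LinearMap.BilinForm F V) (k : ℕ) (u : Fin k → V) :
    ⋀[F]^k V →ₗ[F] F :=
  (ExteriorAlgebra.liftAlternating (Pi.single k (innerAlt ζ k u))).comp (⋀[F]^k V).subtype

lemma innerMap_wedge (ζ : LinearMap.BilinForm F V) (k : ℕ) (u v : Fin k → V) :
    innerMap ζ k u (wedge k v) = innerAlt ζ k u v := by
  simp [innerMap, wedge, ExteriorAlgebra.liftAlternating_apply_ιMulti]

noncomputable def outerMap (ζ : LinearMap.BilinForm F V) (k : ℕ) :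
    V [⋀^Fin k]→ₗ[F] (⋀[F]^k V →ₗ[F] F) where
  toFun u := innerMap ζ k u
  map_update_add' u i x y := by
    apply wedge_ext
    intro v
    simp only [LinearMap.add_apply, innerMap_wedge, innerAlt_swap]
    exact (outerAlt ζ k v).map_update_add u i x y
  map_update_smul' u i c x := by
    apply wedge_ext
    intro v
    simp only [LinearMap.smul_apply, innerMap_wedge, innerAlt_swap]
    exact (outerAlt ζ k v).map_update_smul u i c x
  map_eq_zero_of_eq' u i j hij hne := by
    apply wedge_ext (g := 0)
    intro v
    simp only [LinearMap.zero_apply, innerMap_wedge, innerAlt_swap]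
    exact (outerAlt ζ k v).map_eq_zero_of_eq u hij hne

noncomputable def B0 (ζ : LinearMap.BilinForm F V) (k : ℕ) :
    LinearMap.BilinForm F (⋀[F]^k V) :=
  (ExteriorAlgebra.liftAlternating (Pi.single k (outerMap ζ k))).comp (⋀[F]^k V).subtype

lemma B0_wedge (ζ : LinearMap.BilinForm F V) (k : ℕ) (u v : Fin k → V) :
    B0 ζ k (wedge k u) (wedge k v) = Matrix.det (Matrix.of fun i j => ζ (u i) (v j)) := by
  have : B0 ζ k (wedge k u) = innerMap ζ k u := by
    simp [B0, wedge, ExteriorAlgebra.liftAlternating_apply_ιMulti]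
    rfl
  rw [this, innerMap_wedge, innerAlt_apply]

/-- `wedge` as an alternating map. -/
noncomputable def wedgeAlt (k : ℕ) : V [⋀^Fin k]→ₗ[F] (⋀[F]^k V) :=
  (ExteriorAlgebra.ιMulti F k).codRestrict (⋀[F]^k V)
    (fun u => ExteriorAlgebra.ιMulti_range F k (Set.mem_range_self u))

lemma wedgeAlt_apply (k : ℕ) (u : Fin k → V) : wedgeAlt (F := F) k u = wedge k u := rfl

lemma basis_wedge_span {n : ℕ} (b : Module.Basis (Fin n) F V) (k : ℕ) :
    Submodule.span F (Set.range (fun s : {s : Finset (Fin n) // s.card = k} =>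
      wedge (F := F) k (fun i => b (s.1.orderIsoOfFin s.2 i)))) = ⊤ := by
  set bw := fun s : {s : Finset (Fin n) // s.card = k} =>
    wedge (F := F) k (fun i => b (s.1.orderIsoOfFin s.2 i)) with hbw
  rw [eq_top_iff, ← wedge_span k, Submodule.span_le]
  rintro x ⟨u, rfl⟩
  set p := Submodule.span F (Set.range bw)
  have hu : ∀ i, u i = ∑ j, b.repr (u i) j • b j := fun i => (b.sum_repr (u i)).symm
  have : wedge k u = wedgeAlt (F := F) k (fun i => ∑ j, b.repr (u i) j • b j) := by
    rw [← wedgeAlt_apply]; congr 1; ext i; exact hu i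
  rw [this]
  rw [show (wedgeAlt (F := F) (V := V) k : (Fin k → V) → ⋀[F]^k V) = ⇑(wedgeAlt (F := F) (V := V) k).toMultilinearMap from rfl]
  rw [MultilinearMap.map_sum]
  apply Submodule.sum_mem
  intro r _
  have hterm : (wedgeAlt (F := F) (V := V) k).toMultilinearMap
      (fun i => b.repr (u i) (r i) • b (r i))
      = (∏ i, b.repr (u i) (r i)) • (wedgeAlt (F := F) k) (b ∘ r) := by
    rw [MultilinearMap.map_smul_univ]; rfl
  rw [hterm]
  apply Submodule.smul_mem
  by_cases hr : Function.Injective r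
  · -- image set
    have hcard : (Finset.image r Finset.univ).card = k := by
      rw [Finset.card_image_of_injective _ hr, Finset.card_univ, Fintype.card_fin]
    set s : {s : Finset (Fin n) // s.card = k} := ⟨Finset.image r Finset.univ, hcard⟩
    have hmem : ∀ i, r i ∈ s.1 := fun i => Finset.mem_image_of_mem r (Finset.mem_univ i)
    set e := s.1.orderIsoOfFin s.2
    -- σ : Fin k ≃ Fin k with e (σ i) = r i
    have hbij : Function.Bijective (fun i => e.symm ⟨r i, hmem i⟩) := by
      have hinj : Function.Injective (fun i => e.symm ⟨r i, hmem i⟩) := by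
        intro i j hij
        have := congrArg e hij
        simp only [OrderIso.apply_symm_apply, Subtype.mk.injEq] at this
        exact hr this
      exact ⟨hinj, Finite.surjective_of_injective hinj⟩
    set σ : Equiv.Perm (Fin k) := Equiv.ofBijective _ hbij
    have hcomp : (b ∘ r) = (fun i => b (e i)) ∘ σ := by
      ext i
      simp only [Function.comp_apply]
      congr 1
      have : e (σ i) = ⟨r i, hmem i⟩ := by
        simp [σ, Equiv.ofBijective_apply, OrderIso.apply_symm_apply]
      exact congrArg Subtype.val this.symm
    rw [hcomp, AlternatingMap.map_perm]
    rcases Int.units_eq_one_or (Equiv.Perm.sign σ) with h | h <;> rw [h]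
    · simpa [wedgeAlt_apply] using Submodule.subset_span (Set.mem_range_self s)
    · simp only [Units.smul_def, Units.val_neg, Units.val_one, neg_zsmul, one_zsmul]
      exact Submodule.neg_mem _ (by simpa [wedgeAlt_apply] using Submodule.subset_span (Set.mem_range_self s))
  · -- non-injective : zero
    rw [Function.not_injective_iff] at hr
    obtain ⟨i, j, hij, hne⟩ := hr
    have : wedgeAlt (F := F) (V := V) k (b ∘ r) = 0 :=
      AlternatingMap.map_eq_zero_of_eq _ _ (by simp [Function.comp, hij]) hne
    rw [this]
    exact Submodule.zero_mem _

lemma prop_unique {k : ℕ} {ζ : LinearMap.BilinForm F V}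
    {B B' : LinearMap.BilinForm F (⋀[F]^k V)}
    (h : ∀ u v, B (wedge k u) (wedge k v) = Matrix.det (Matrix.of fun i j => ζ (u i) (v j)))
    (h' : ∀ u v, B' (wedge k u) (wedge k v) = Matrix.det (Matrix.of fun i j => ζ (u i) (v j))) :
    B = B' := by
  apply wedge_ext
  intro u
  apply wedge_ext
  intro v
  rw [h, h']

lemma prop_nondeg [FiniteDimensional F V] {k : ℕ} {ζ : LinearMap.BilinForm F V}
    (B : LinearMap.BilinForm F (⋀[F]^k V))
    (h : ∀ u v, B (wedge k u) (wedge k v) = Matrix.det (Matrix.of fun i j => ζ (u i) (v j)))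
    (hζ : ζ.Nondegenerate) : B.Nondegenerate := by
  refine LinearMap.BilinForm.Nondegenerate.ofSeparatingLeft ?_
  intro x hx
  set n := Module.finrank F V
  set b := Module.finBasis F V with hb
  have hζf : ζ.flip.Nondegenerate := hζ.flip
  set f := ζ.flip.dualBasis hζf b with hf
  have hδ : ∀ a c : Fin n, ζ (b a) (f c) = if a = c then 1 else 0 := by
    intro a c
    have := ζ.flip.apply_dualBasis_left hζf b c a
    rwa [LinearMap.BilinForm.flip_apply] at this
  -- expand x in the basis-subset wedges
  set bw := fun s : {s : Finset (Fin n) // s.card = k} =>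
    wedge (F := F) k (fun i => b (s.1.orderIsoOfFin s.2 i)) with hbwdef
  have hxmem : x ∈ Submodule.span F (Set.range bw) := by
    rw [basis_wedge_span b k]; trivial
  obtain ⟨c, hc⟩ := (Submodule.mem_span_range_iff_exists_fun F).1 hxmem
  set fw := fun s : {s : Finset (Fin n) // s.card = k} =>
    wedge (F := F) k (fun i => f (s.1.orderIsoOfFin s.2 i)) with hfwdef
  have hBst : ∀ s t : {s : Finset (Fin n) // s.card = k},
      B (bw s) (fw t) = if s = t then 1 else 0 := by
    intro s t
    rw [hbwdef, hfwdef, h]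
    by_cases hst : s = t
    · subst hst
      rw [if_pos rfl]
      have : (Matrix.of fun i j => ζ (b (s.1.orderIsoOfFin s.2 i)) (f (s.1.orderIsoOfFin s.2 j)))
          = (1 : Matrix (Fin k) (Fin k) F) := by
        ext i j
        rw [Matrix.of_apply, hδ, Matrix.one_apply]
        simp only [Subtype.coe_inj, (s.1.orderIsoOfFin s.2).injective.eq_iff,
          EmbeddingLike.apply_eq_iff_eq]
      rw [this, Matrix.det_one]
    · rw [if_neg hst]
      have hnsub : ¬ s.1 ⊆ t.1 := by
        intro hsub
        exact hst (Subtype.ext (Finset.eq_of_subset_of_card_le hsub (by rw [s.2, t.2])))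
      obtain ⟨a, has, hat⟩ := Finset.not_subset.1 hnsub
      set i0 := (s.1.orderIsoOfFin s.2).symm ⟨a, has⟩
      apply Matrix.det_eq_zero_of_row_eq_zero i0
      intro j
      rw [Matrix.of_apply, hδ, if_neg]
      intro heq
      apply hat
      have : (s.1.orderIsoOfFin s.2 i0 : Fin n) = a := by
        simp [i0]
      rw [this] at heq
      rw [heq]
      exact (t.1.orderIsoOfFin t.2 j).2
  have hct : ∀ t, c t = 0 := by
    intro t
    have h0 := hx (fw t)
    rw [← hc] at h0
    simp only [map_sum, LinearMap.smul_apply, map_smul, LinearMap.sum_apply] at h0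
    rw [Finset.sum_eq_single t] at h0
    · rw [hBst t t, if_pos rfl, smul_eq_mul, mul_one] at h0
      exact h0
    · intro s _ hst
      rw [hBst s t, if_neg hst, smul_eq_mul, mul_zero]
    · intro ht; exact absurd (Finset.mem_univ t) ht
  rw [← hc]
  simp [hct]

lemma prop_symm {k : ℕ} {ζ : LinearMap.BilinForm F V}
    (B : LinearMap.BilinForm F (⋀[F]^k V))
    (h : ∀ u v, B (wedge k u) (wedge k v) = Matrix.det (Matrix.of fun i j => ζ (u i) (v j)))
    (hsym : ∀ u v : V, ζ u v = ζ v u) : ∀ x y, B x y = B y x := by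
  have hflip : ∀ u v, B.flip (wedge k u) (wedge k v)
      = Matrix.det (Matrix.of fun i j => ζ (u i) (v j)) := by
    intro u v
    rw [LinearMap.BilinForm.flip_apply, h]
    rw [← Matrix.det_transpose]
    congr 1
    ext i j
    simp only [Matrix.transpose_apply, Matrix.of_apply]
    exact hsym (v j) (u i)
  have : B.flip = B := prop_unique hflip h
  intro x y
  conv_rhs => rw [← this]
  rfl


end Aux

/-- For a bilinear form `ζ` on a finite-dimensional space `V` and `1 ≤ k ≤ dim V`, there is
a unique bilinear form `ζ∧` on `⋀ᵏ V` with `ζ∧(u₁∧⋯∧uₖ, v₁∧⋯∧vₖ) = det (ζ(uᵢ, vⱼ))`;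
moreover any such form is nondegenerate if `ζ` is, and symmetric if `ζ` is. -/
theorem stmt6 {F V : Type*} [Field F] [AddCommGroup V] [Module F V] [FiniteDimensional F V]
    (ζ : LinearMap.BilinForm F V) (k : ℕ) (hk1 : 1 ≤ k) (hk2 : k ≤ Module.finrank F V) :
    (∃! B : LinearMap.BilinForm F (⋀[F]^k V),
      ∀ u v : Fin k → V,
        B (wedge k u) (wedge k v) = Matrix.det (Matrix.of fun i j => ζ (u i) (v j))) ∧
    (∀ B : LinearMap.BilinForm F (⋀[F]^k V),
      (∀ u v : Fin k → V,
        B (wedge k u) (wedge k v) = Matrix.det (Matrix.of fun i j => ζ (u i) (v j))) →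
      ζ.Nondegenerate → B.Nondegenerate) ∧
    (∀ B : LinearMap.BilinForm F (⋀[F]^k V),
      (∀ u v : Fin k → V,
        B (wedge k u) (wedge k v) = Matrix.det (Matrix.of fun i j => ζ (u i) (v j))) →
      (∀ u v : V, ζ u v = ζ v u) → ∀ x y : ⋀[F]^k V, B x y = B y x) :=
  ⟨⟨B0 ζ k, B0_wedge ζ k, fun B' h' => prop_unique h' (B0_wedge ζ k)⟩,
    fun B h hζ => prop_nondeg B h hζ, fun B h hs => prop_symm B h hs⟩
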